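/- Let f : [0,∞) → ℝ satisfy (H1), let μ > 0, and suppose there exists a₀ > 0 such that f(x) ≠ 0 for all x ≥ a₀. Then the series Σ_{n≥1} 1/(μ·n + F⁻(n)) diverges if and only if ∫_{a₀}^∞ 1/|f(x)| dx = ∞. -/

import Mathlib

open MeasureTheory Set
open scoped NNReal ENNReal

lemma tsum_ofReal_eq_top_iff {u : ℕ → ℝ} (hu : ∀ n, 0 ≤ u n) :
    (∑' n, ENNReal.ofReal (u n)) = ⊤ ↔ ¬ Summable u := by
  have h1 : ∀ n, ENNReal.ofReal (u n) = ((u n).toNNReal : ℝ≥0∞) := fun n => rfl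
  simp_rw [h1]
  rw [← not_iff_not, not_not, ← Ne, ENNReal.tsum_coe_ne_top_iff_summable]
  constructor
  · intro h
    have := NNReal.summable_coe.2 h
    refine this.congr fun n => Real.coe_toNNReal _ (hu n)
  · intro h
    rw [← NNReal.summable_coe]
    refine h.congr fun n => (Real.coe_toNNReal _ (hu n)).symm

lemma not_summable_inv_linear {c : ℝ} (hc : 0 < c) (k : ℕ) :
    ¬ Summable (fun n : ℕ => 1 / (c * ((n : ℝ) + k + 1))) := by
  intro h
  have h2 : Summable (fun n : ℕ => 1 / ((n : ℝ) + k + 1)) := by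
    have := h.mul_left c
    refine this.congr fun n => ?_
    have hn : (0:ℝ) < (n:ℝ) + k + 1 := by positivity
    field_simp
  have h3 : Summable (fun n : ℕ => 1 / (((n + (k+1) : ℕ)) : ℝ)) := by
    refine h2.congr fun n => ?_
    push_cast
    ring_nf
  exact Real.not_summable_one_div_natCast
    ((summable_nat_add_iff (f := fun n : ℕ => 1 / (n:ℝ)) (k+1)).1 h3)


lemma Ici_eq_iUnion_Ico (N : ℕ) :
    Ici (N:ℝ) = ⋃ j : ℕ, Ico ((N:ℝ)+j) ((N:ℝ)+j+1) := by
  ext x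
  simp only [mem_Ici, mem_iUnion, mem_Ico]
  constructor
  · intro hx
    have hx0 : (0:ℝ) ≤ x := le_trans (Nat.cast_nonneg N) hx
    have hfl : N ≤ Nat.floor x := Nat.le_floor hx
    refine ⟨Nat.floor x - N, ?_, ?_⟩
    · rw [← Nat.cast_add, Nat.add_sub_cancel' hfl]
      exact Nat.floor_le hx0
    · rw [← Nat.cast_add, Nat.add_sub_cancel' hfl]
      exact Nat.lt_floor_add_one x
  · rintro ⟨j, h1, _⟩
    have hj : (0:ℝ) ≤ (j:ℝ) := Nat.cast_nonneg j
    linarith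

lemma lintegral_Ici_eq_tsum (N : ℕ) (h : ℝ → ℝ≥0∞) :
    (∫⁻ x in Ici (N:ℝ), h x) = ∑' j : ℕ, ∫⁻ x in Ico ((N:ℝ)+j) ((N:ℝ)+j+1), h x := by
  rw [Ici_eq_iUnion_Ico]
  refine lintegral_iUnion (fun j => measurableSet_Ico) ?_ h
  intro i j hij
  rcases hij.lt_or_gt with hlt | hlt
  · simp only [Function.onFun]
    rw [Set.Ico_disjoint_Ico]
    have : (i:ℝ) + 1 ≤ j := by exact_mod_cast hlt
    rw [min_def, max_def]
    split_ifs <;> linarith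
  · simp only [Function.onFun]
    rw [Set.Ico_disjoint_Ico]
    have : (j:ℝ) + 1 ≤ i := by exact_mod_cast hlt
    rw [min_def, max_def]
    split_ifs <;> linarith

lemma interval_lintegral_ge (a : ℝ) (u : ℝ → ℝ) (m : ℝ)
    (hm : ∀ x ∈ Ico a (a+1), m ≤ u x) :
    ENNReal.ofReal m ≤ ∫⁻ x in Ico a (a+1), ENNReal.ofReal (u x) := by
  have h1 : (∫⁻ _ in Ico a (a+1), ENNReal.ofReal m) = ENNReal.ofReal m := by
    rw [setLIntegral_const, Real.volume_Ico]
    simp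
  rw [← h1]
  exact setLIntegral_mono' measurableSet_Ico fun x hx => ENNReal.ofReal_le_ofReal (hm x hx)

lemma interval_lintegral_le (a : ℝ) (u : ℝ → ℝ) (m : ℝ)
    (hm : ∀ x ∈ Ico a (a+1), u x ≤ m) :
    (∫⁻ x in Ico a (a+1), ENNReal.ofReal (u x)) ≤ ENNReal.ofReal m := by
  have h1 : (∫⁻ _ in Ico a (a+1), ENNReal.ofReal m) = ENNReal.ofReal m := by
    rw [setLIntegral_const, Real.volume_Ico]
    simp
  rw [← h1]
  exact setLIntegral_mono' measurableSet_Ico fun x hx => ENNReal.ofReal_le_ofReal (hm x hx)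


lemma no_dip (g : ℝ → ℝ) (θ mu : ℝ) (hθ : 0 ≤ θ) (hmu : 0 < mu)
    (a : ℕ → ℝ) (ha_pos : ∀ n, 0 < a n)
    (hlip : ∀ x ≥ (0:ℝ), ∀ y ≥ (0:ℝ), g y - θ * x ≤ g (x + y))
    (ha_ub : ∀ n : ℕ, a n ≤ (mu + θ) * ((n:ℝ) + 1) + g ((n:ℝ) + 1))
    (hs : Summable (fun n => 1 / a n)) :
    ∃ N : ℕ, ∀ n : ℕ, N ≤ n → (n:ℝ) < g n := by
  by_contra hcon
  push_neg at hcon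
  set C : ℝ := mu + 2*θ + 1 with hCdef
  have hC : 0 < C := by positivity
  have hc2 : 0 < 1/(2*C) := by positivity
  obtain ⟨s, hsv⟩ := summable_iff_vanishing.1 hs (Metric.ball 0 (1/(2*C)))
    (Metric.ball_mem_nhds 0 hc2)
  set M : ℕ := s.sup id + 1 with hMdef
  obtain ⟨n, hnM, hgn⟩ := hcon (2*M + 2)
  have hMn : M ≤ n := by omega
  have hn1 : 1 ≤ n := by omega
  have hnpos : (0:ℝ) < n := by exact_mod_cast hn1
  have hdisj : Disjoint (Finset.Ico M n) s := by
    rw [Finset.disjoint_left]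
    intro k hk hks
    have h1 : M ≤ k := (Finset.mem_Ico.1 hk).1
    have h2 : k ≤ s.sup id := Finset.le_sup (f := id) hks
    omega
  have hkey : ∀ k ∈ Finset.Ico M n, 1/(C*(n:ℝ)) ≤ 1 / a k := by
    intro k hk
    have hkn : k + 1 ≤ n := (Finset.mem_Ico.1 hk).2
    have hkn' : (k:ℝ) + 1 ≤ (n:ℝ) := by exact_mod_cast hkn
    have hg1 : g ((k:ℝ)+1) ≤ g n + θ * ((n:ℝ) - ((k:ℝ)+1)) := by
      have := hlip ((n:ℝ) - ((k:ℝ)+1)) (by linarith) ((k:ℝ)+1) (by positivity)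
      have he : (n:ℝ) - ((k:ℝ)+1) + ((k:ℝ)+1) = (n:ℝ) := by ring
      rw [he] at this
      linarith
    have hg2 : g ((k:ℝ)+1) ≤ (n:ℝ) + θ * (n:ℝ) := by
      have h3 : θ * ((n:ℝ) - ((k:ℝ)+1)) ≤ θ * (n:ℝ) := by nlinarith
      linarith
    have hak : a k ≤ C * (n:ℝ) := by
      have := ha_ub k
      have h4 : (mu+θ) * ((k:ℝ)+1) ≤ (mu+θ) * (n:ℝ) := by nlinarith
      rw [hCdef]
      nlinarith
    exact one_div_le_one_div_of_le (ha_pos k) hak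
  have hsum : (1:ℝ)/(2*C) ≤ ∑ k ∈ Finset.Ico M n, 1 / a k := by
    have h5 : ∑ k ∈ Finset.Ico M n, 1/(C*(n:ℝ)) ≤ ∑ k ∈ Finset.Ico M n, 1 / a k :=
      Finset.sum_le_sum hkey
    have hcard : (Finset.Ico M n).card = n - M := Nat.card_Ico M n
    have h6 : ∑ _k ∈ Finset.Ico M n, 1/(C*(n:ℝ)) = ((n - M : ℕ):ℝ) * (1/(C*(n:ℝ))) := by
      rw [Finset.sum_const, hcard, nsmul_eq_mul]
    have h7 : ((n - M : ℕ):ℝ) = (n:ℝ) - M := by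
      rw [Nat.cast_sub hMn]
    have h8 : (n:ℝ)/2 ≤ (n:ℝ) - M := by
      have : (2*M + 2 : ℝ) ≤ n := by exact_mod_cast hnM
      have hM0 : (0:ℝ) ≤ M := Nat.cast_nonneg M
      linarith
    have h9 : (1:ℝ)/(2*C) ≤ ((n:ℝ) - M) * (1/(C*(n:ℝ))) := by
      rw [div_le_iff₀ (by positivity)]
      have : ((n:ℝ) - M) * (1/(C*(n:ℝ))) * (2*C) = ((n:ℝ) - M) * 2 / n := by
        field_simp
      rw [this]
      rw [le_div_iff₀ hnpos]
      linarith
    calc (1:ℝ)/(2*C) ≤ ((n:ℝ) - M) * (1/(C*(n:ℝ))) := h9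
      _ = ∑ _k ∈ Finset.Ico M n, 1/(C*(n:ℝ)) := by rw [h6, h7]
      _ ≤ _ := h5
  have := hsv (Finset.Ico M n) hdisj
  rw [Metric.mem_ball, Real.dist_eq, sub_zero] at this
  have habs : ∑ k ∈ Finset.Ico M n, 1 / a k ≤ |∑ k ∈ Finset.Ico M n, 1 / a k| :=
    le_abs_self _
  linarith


lemma F_bounds (f : ℝ → ℝ) (θ : ℝ) (hθ : 0 ≤ θ) (hf0 : f 0 = 0)
    (hH1 : ∀ x ≥ (0:ℝ), ∀ y ≥ (0:ℝ), f (x + y) - f y ≤ θ * x) (j : ℕ) :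
    -f (j:ℝ) ≤ (∑ ℓ ∈ Finset.Icc 1 j, max (-(f ℓ - f ((ℓ:ℝ)-1))) 0) ∧
      (∑ ℓ ∈ Finset.Icc 1 j, max (-(f ℓ - f ((ℓ:ℝ)-1))) 0) ≤ -f (j:ℝ) + θ * j := by
  have hconv : (∑ ℓ ∈ Finset.Icc 1 j, max (-(f ℓ - f ((ℓ:ℝ)-1))) 0)
      = ∑ i ∈ Finset.range j, max (-(f ((i:ℝ)+1) - f (i:ℝ))) 0 := by
    rw [← Finset.Ico_add_one_right_eq_Icc, Finset.sum_Ico_eq_sum_range]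
    have hjj : j + 1 - 1 = j := by omega
    rw [hjj]
    refine Finset.sum_congr rfl fun i _ => ?_
    push_cast
    ring_nf
  have hmaxid : ∀ x : ℝ, max (-x) 0 = -x + max x 0 := by
    intro x
    rcases le_total x 0 with h | h
    · rw [max_eq_left (by linarith), max_eq_right h]
      ring
    · rw [max_eq_right (by linarith), max_eq_left h]
      ring
  have hsplit : (∑ i ∈ Finset.range j, max (-(f ((i:ℝ)+1) - f (i:ℝ))) 0)
      = -f (j:ℝ) + ∑ i ∈ Finset.range j, max (f ((i:ℝ)+1) - f (i:ℝ)) 0 := by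
    simp_rw [hmaxid]
    rw [Finset.sum_add_distrib, Finset.sum_neg_distrib]
    have htel : (∑ i ∈ Finset.range j, (f ((i:ℝ)+1) - f (i:ℝ))) = f (j:ℝ) - f 0 := by
      have h := Finset.sum_range_sub (f := fun i : ℕ => f (i:ℝ)) j
      push_cast at h
      rw [← h]
    rw [htel, hf0]
    ring
  have hE0 : (0:ℝ) ≤ ∑ i ∈ Finset.range j, max (f ((i:ℝ)+1) - f (i:ℝ)) 0 :=
    Finset.sum_nonneg fun i _ => le_max_right _ _
  have hEθ : (∑ i ∈ Finset.range j, max (f ((i:ℝ)+1) - f (i:ℝ)) 0) ≤ θ * j := by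
    have h1 : ∀ i ∈ Finset.range j, max (f ((i:ℝ)+1) - f (i:ℝ)) 0 ≤ θ := by
      intro i _
      have := hH1 1 (by norm_num) (i:ℝ) (Nat.cast_nonneg i)
      rw [max_le_iff]
      constructor
      · have he : (1:ℝ) + (i:ℝ) = (i:ℝ) + 1 := by ring
        rw [he] at this
        linarith
      · exact hθ
    calc _ ≤ ∑ _i ∈ Finset.range j, θ := Finset.sum_le_sum h1
      _ = θ * j := by
        rw [Finset.sum_const, nsmul_eq_mul, Finset.card_range, mul_comm]
  rw [hconv, hsplit]
  constructor
  · linarith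
  · linarith


lemma tail_top (v : ℕ → ℝ≥0∞) (hv : ∀ n, v n ≠ ⊤) (htop : (∑' n, v n) = ⊤) (N : ℕ) :
    (∑' j, v (N + j)) = ⊤ := by
  induction N with
  | zero => simpa using htop
  | succ N ih =>
      have h := ENNReal.tsum_add_one_eq_top (f := fun j => v (N + j)) ih (hv N)
      rw [← h]
      refine tsum_congr fun j => ?_
      congr 1
      omega

lemma lintegral_inv_top (u : ℝ → ℝ) {c a₀ : ℝ} (hc : 0 < c)
    (hu : ∀ x ≥ a₀, 0 < u x ∧ u x ≤ c * x) :
    (∫⁻ x in Ici a₀, ENNReal.ofReal (1 / u x)) = ⊤ := by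
  set N : ℕ := ⌈a₀⌉₊ with hN
  have hNa : a₀ ≤ (N:ℝ) := Nat.le_ceil a₀
  refine top_le_iff.1 ?_
  calc (⊤:ℝ≥0∞) = ∑' j : ℕ, ENNReal.ofReal (1 / (c * ((j:ℝ) + N + 1))) := by
        rw [eq_comm, tsum_ofReal_eq_top_iff fun j => by positivity]
        exact not_summable_inv_linear hc N
    _ ≤ ∑' j : ℕ, ∫⁻ x in Ico ((N:ℝ)+j) ((N:ℝ)+j+1), ENNReal.ofReal (1/u x) := by
        refine ENNReal.tsum_le_tsum fun j => ?_
        refine interval_lintegral_ge _ _ _ fun x hx => ?_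
        obtain ⟨hx1, hx2⟩ := hx
        have hj0 : (0:ℝ) ≤ (j:ℝ) := Nat.cast_nonneg j
        have hxa : a₀ ≤ x := by linarith
        obtain ⟨hu1, hu2⟩ := hu x hxa
        have hux : u x ≤ c * ((j:ℝ) + N + 1) := by nlinarith
        calc 1 / (c * ((j:ℝ) + N + 1)) ≤ 1 / u x :=
              one_div_le_one_div_of_le hu1 hux
          _ = _ := rfl
    _ = ∫⁻ x in Ici (N:ℝ), ENNReal.ofReal (1/u x) := (lintegral_Ici_eq_tsum N _).symm
    _ ≤ _ := lintegral_mono_set (Ici_subset_Ici.2 hNa)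


lemma caseneg_sum_to_int (g : ℝ → ℝ) (θ mu a₀ : ℝ) (hθ : 0 ≤ θ) (hmu : 0 < mu)
    (ha₀ : 0 < a₀)
    (a : ℕ → ℝ) (ha_pos : ∀ n, 0 < a n)
    (hlip : ∀ x ≥ (0:ℝ), ∀ y ≥ (0:ℝ), g y - θ * x ≤ g (x + y))
    (hgpos : ∀ x ≥ a₀, 0 < g x)
    (ha_lb : ∀ n : ℕ, mu * ((n:ℝ) + 1) + g ((n:ℝ) + 1) ≤ a n)
    (hns : ¬ Summable (fun n => 1 / a n)) :
    (∫⁻ x in Ici a₀, ENNReal.ofReal (1 / g x)) = ⊤ := by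
  set N : ℕ := ⌈a₀⌉₊ with hNdef
  have hNa : a₀ ≤ (N:ℝ) := Nat.le_ceil a₀
  set D : ℝ := max 1 (θ / mu) with hDdef
  have hD1 : (1:ℝ) ≤ D := le_max_left _ _
  have hD0 : (0:ℝ) < D := lt_of_lt_of_le one_pos hD1
  have hDθ : θ / mu ≤ D := le_max_right _ _
  -- the tail of the series is still divergent as an ENNReal tsum
  have htot : (∑' n : ℕ, ENNReal.ofReal (1 / a n)) = ⊤ :=
    (tsum_ofReal_eq_top_iff fun n => le_of_lt (one_div_pos.2 (ha_pos n))).2 hns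
  have htail : (∑' j : ℕ, ENNReal.ofReal (1 / a (N + j))) = ⊤ :=
    tail_top _ (fun n => ENNReal.ofReal_ne_top) htot N
  refine top_le_iff.1 ?_
  have key : ∀ j : ℕ, ENNReal.ofReal (1/D) * ENNReal.ofReal (1 / a (N + j))
      ≤ ∫⁻ x in Ico ((N:ℝ)+j) ((N:ℝ)+j+1), ENNReal.ofReal (1 / g x) := by
    intro j
    set n : ℕ := N + j with hn
    have hcast : ((n:ℝ)) = (N:ℝ) + j := by push_cast [hn]; ring
    rw [← ENNReal.ofReal_mul (by positivity)]
    have hga : a₀ ≤ (n:ℝ) + 1 := by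
      have : (0:ℝ) ≤ (j:ℝ) := Nat.cast_nonneg j
      linarith [hNa]
    have hgn1 : 0 < g ((n:ℝ)+1) := hgpos _ hga
    have hbound : 1/D * (1 / a n) ≤ 1 / (g ((n:ℝ)+1) + θ) := by
      have h1 : g ((n:ℝ)+1) + θ ≤ D * a n := by
        have h2 : θ ≤ (θ/mu) * (mu * ((n:ℝ)+1)) := by
          have he : (θ/mu) * (mu * ((n:ℝ)+1)) = θ * ((n:ℝ)+1) := by
            field_simp
          rw [he]
          have hn0 : (0:ℝ) ≤ (n:ℝ) := Nat.cast_nonneg n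
          nlinarith
        have h3 : g ((n:ℝ)+1) + θ ≤ D * (mu * ((n:ℝ)+1) + g ((n:ℝ)+1)) := by
          have h4 : (θ/mu) * (mu*((n:ℝ)+1)) ≤ D * (mu*((n:ℝ)+1)) := by
            have : (0:ℝ) < mu*((n:ℝ)+1) := by positivity
            nlinarith
          nlinarith
        have h5 : D * (mu * ((n:ℝ)+1) + g ((n:ℝ)+1)) ≤ D * a n := by
          have := ha_lb n
          nlinarith
        linarith
      rw [div_mul_eq_mul_div, one_mul, div_div]
      apply one_div_le_one_div_of_le
      · positivity
      · rw [mul_comm]; exact h1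
    refine le_trans (ENNReal.ofReal_le_ofReal hbound) ?_
    refine interval_lintegral_ge _ _ _ fun x hx => ?_
    obtain ⟨hx1, hx2⟩ := hx
    have hj0 : (0:ℝ) ≤ (j:ℝ) := Nat.cast_nonneg j
    have hxa : a₀ ≤ x := by linarith
    have hgx : 0 < g x := hgpos x hxa
    have hgub : g x ≤ g ((n:ℝ)+1) + θ := by
      have hx0 : (0:ℝ) ≤ x := le_trans (le_of_lt ha₀) hxa
      have hd0 : (0:ℝ) ≤ (n:ℝ) + 1 - x := by rw [hcast]; linarith
      have := hlip ((n:ℝ) + 1 - x) hd0 x hx0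
      have he : (n:ℝ) + 1 - x + x = (n:ℝ) + 1 := by ring
      rw [he] at this
      have hθx : θ * ((n:ℝ) + 1 - x) ≤ θ := by
        have hle1 : (n:ℝ) + 1 - x ≤ 1 := by rw [hcast]; linarith
        nlinarith
      linarith
    apply one_div_le_one_div_of_le hgx hgub
  calc (⊤:ℝ≥0∞) = ENNReal.ofReal (1/D) * ∑' j : ℕ, ENNReal.ofReal (1 / a (N + j)) := by
        rw [htail, ENNReal.mul_top]
        simp only [ne_eq, ENNReal.ofReal_eq_zero, not_le]
        positivity
    _ = ∑' j : ℕ, ENNReal.ofReal (1/D) * ENNReal.ofReal (1 / a (N + j)) :=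
        ENNReal.tsum_mul_left.symm
    _ ≤ ∑' j : ℕ, ∫⁻ x in Ico ((N:ℝ)+j) ((N:ℝ)+j+1), ENNReal.ofReal (1 / g x) :=
        ENNReal.tsum_le_tsum key
    _ = ∫⁻ x in Ici (N:ℝ), ENNReal.ofReal (1 / g x) := (lintegral_Ici_eq_tsum N _).symm
    _ ≤ _ := lintegral_mono_set (Ici_subset_Ici.2 hNa)

lemma caseneg_int_finite (g : ℝ → ℝ) (θ mu a₀ : ℝ) (hθ : 0 ≤ θ) (hmu : 0 < mu)
    (ha₀ : 0 < a₀) (hg_cont : ContinuousOn g (Ici 0))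
    (a : ℕ → ℝ) (ha_pos : ∀ n, 0 < a n)
    (hlip : ∀ x ≥ (0:ℝ), ∀ y ≥ (0:ℝ), g y - θ * x ≤ g (x + y))
    (hgpos : ∀ x ≥ a₀, 0 < g x)
    (ha_ub : ∀ n : ℕ, a n ≤ (mu + θ) * ((n:ℝ) + 1) + g ((n:ℝ) + 1))
    (hs : Summable (fun n => 1 / a n)) :
    (∫⁻ x in Ici a₀, ENNReal.ofReal (1 / g x)) ≠ ⊤ := by
  obtain ⟨N₀, hN₀⟩ := no_dip g θ mu hθ hmu a ha_pos hlip ha_ub hs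
  set K : ℕ := N₀ + ⌈a₀⌉₊ + ⌈2*θ⌉₊ + 1 with hKdef
  have hKa : a₀ ≤ (K:ℝ) := by
    have h1 : a₀ ≤ (⌈a₀⌉₊:ℝ) := Nat.le_ceil a₀
    have h2 : (⌈a₀⌉₊:ℕ) ≤ K := by omega
    have h2' : ((⌈a₀⌉₊:ℕ):ℝ) ≤ (K:ℝ) := by exact_mod_cast h2
    linarith
  have hKθ : 2*θ ≤ (K:ℝ) := by
    have h1 : 2*θ ≤ (⌈2*θ⌉₊:ℝ) := Nat.le_ceil _
    have h2 : (⌈2*θ⌉₊:ℕ) ≤ K := by omega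
    have h2' : ((⌈2*θ⌉₊:ℕ):ℝ) ≤ (K:ℝ) := by exact_mod_cast h2
    linarith
  have hK1 : 1 ≤ K := by omega
  have hKN₀ : N₀ ≤ K := by omega
  set E : ℝ := 2*(mu+θ+1) with hEdef
  have hE0 : 0 < E := by positivity
  -- tail estimate
  have hsum_shift : Summable (fun j : ℕ => 1 / a ((K-1) + j)) := by
    have h := (summable_nat_add_iff (f := fun n => 1 / a n) (K-1)).2 hs
    refine h.congr fun j => ?_
    rw [Nat.add_comm]
  have htail_ne : (∑' j : ℕ, ENNReal.ofReal (1 / a ((K-1) + j))) ≠ ⊤ := by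
    intro h
    exact ((tsum_ofReal_eq_top_iff fun j =>
      le_of_lt (one_div_pos.2 (ha_pos _))).1 h) hsum_shift
  have hkey : ∀ j : ℕ, (∫⁻ x in Ico ((K:ℝ)+j) ((K:ℝ)+j+1), ENNReal.ofReal (1 / g x))
      ≤ ENNReal.ofReal (E * (1 / a ((K-1) + j))) := by
    intro j
    set n : ℕ := K + j with hn
    have hcast : ((n:ℝ)) = (K:ℝ) + j := by push_cast [hn]; ring
    have hnK : K ≤ n := by omega
    have hgn : (n:ℝ) < g n := hN₀ n (le_trans hKN₀ hnK)
    have hKn : (K:ℝ) ≤ (n:ℝ) := by exact_mod_cast hnK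
    have hgn2θ : 2*θ ≤ g n := le_of_lt (lt_of_le_of_lt (le_trans hKθ hKn) hgn)
    have hgnθpos : 0 < g (n:ℝ) - θ := by
      have h1 : (1:ℝ) ≤ (K:ℝ) := by exact_mod_cast hK1
      linarith
    have h1 : (∫⁻ x in Ico ((K:ℝ)+j) ((K:ℝ)+j+1), ENNReal.ofReal (1 / g x))
        ≤ ENNReal.ofReal (1 / (g n - θ)) := by
      refine interval_lintegral_le _ _ _ fun x hx => ?_
      obtain ⟨hx1, hx2⟩ := hx
      have hglb : g n - θ ≤ g x := by
        have hn0 : (0:ℝ) ≤ (n:ℝ) := Nat.cast_nonneg n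
        have hd0 : (0:ℝ) ≤ x - n := by rw [← hcast] at hx1; linarith
        have := hlip (x - n) hd0 (n:ℝ) hn0
        have he : x - (n:ℝ) + (n:ℝ) = x := by ring
        rw [he] at this
        have hθx : θ * (x - n) ≤ θ := by
          have : x - (n:ℝ) ≤ 1 := by rw [← hcast] at hx2; linarith
          nlinarith
        linarith
      have hgx : 0 < g x := lt_of_lt_of_le hgnθpos hglb
      exact one_div_le_one_div_of_le hgnθpos hglb
    refine le_trans h1 (ENNReal.ofReal_le_ofReal ?_)
    -- 1/(g n - θ) ≤ E * (1/a (K-1+j))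
    set m : ℕ := (K-1) + j with hm
    have hm1 : (m:ℝ) + 1 = (n:ℝ) := by
      have : m + 1 = n := by omega
      exact_mod_cast this
    have ham : a m ≤ E * (g n - θ) := by
      have h2 := ha_ub m
      rw [hm1] at h2
      have h3 : (mu+θ) * (n:ℝ) ≤ (mu+θ) * g n := by nlinarith
      have h4 : g (n:ℝ) - θ ≥ g (n:ℝ) / 2 := by linarith
      have h5 : a m ≤ (mu+θ+1) * g n := by linarith
      rw [hEdef]
      nlinarith
    have h6 : 1 / (E * (g n - θ)) ≤ 1 / a m := one_div_le_one_div_of_le (ha_pos m) ham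
    calc 1 / (g n - θ) = E * (1 / (E * (g n - θ))) := by
          field_simp
      _ ≤ E * (1 / a m) := by nlinarith
  have htailint : (∫⁻ x in Ici (K:ℝ), ENNReal.ofReal (1 / g x)) ≠ ⊤ := by
    rw [lintegral_Ici_eq_tsum K]
    have h7 : (∑' j : ℕ, ∫⁻ x in Ico ((K:ℝ)+j) ((K:ℝ)+j+1), ENNReal.ofReal (1 / g x))
        ≤ ∑' j : ℕ, ENNReal.ofReal E * ENNReal.ofReal (1 / a ((K-1) + j)) := by
      refine ENNReal.tsum_le_tsum fun j => ?_
      refine le_trans (hkey j) ?_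
      rw [ENNReal.ofReal_mul (le_of_lt hE0)]
    rw [ENNReal.tsum_mul_left] at h7
    exact ne_top_of_le_ne_top (ENNReal.mul_ne_top ENNReal.ofReal_ne_top htail_ne) h7
  -- compact part
  have hsub0 : Icc a₀ (K:ℝ) ⊆ Ici 0 := fun x hx => le_trans (le_of_lt ha₀) hx.1
  obtain ⟨z, hz, hzmin⟩ := isCompact_Icc.exists_isMinOn ⟨a₀, left_mem_Icc.2 hKa⟩
    (hg_cont.mono hsub0)
  have hgz : 0 < g z := hgpos z hz.1
  have hcomp : (∫⁻ x in Icc a₀ (K:ℝ), ENNReal.ofReal (1 / g x)) ≠ ⊤ := by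
    have h8 : (∫⁻ x in Icc a₀ (K:ℝ), ENNReal.ofReal (1 / g x))
        ≤ ENNReal.ofReal (1 / g z) * volume (Icc a₀ (K:ℝ)) := by
      rw [← setLIntegral_const]
      refine setLIntegral_mono' measurableSet_Icc fun x hx => ?_
      exact ENNReal.ofReal_le_ofReal (one_div_le_one_div_of_le hgz (hzmin hx))
    refine ne_top_of_le_ne_top ?_ h8
    rw [Real.volume_Icc]
    exact ENNReal.mul_ne_top ENNReal.ofReal_ne_top ENNReal.ofReal_ne_top
  -- combine
  have hcover : Ici a₀ ⊆ Icc a₀ (K:ℝ) ∪ Ici (K:ℝ) := by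
    intro x hx
    rcases le_total x (K:ℝ) with h | h
    · exact Or.inl ⟨hx, h⟩
    · exact Or.inr h
  have hfinal : (∫⁻ x in Ici a₀, ENNReal.ofReal (1 / g x))
      ≤ (∫⁻ x in Icc a₀ (K:ℝ), ENNReal.ofReal (1 / g x))
        + ∫⁻ x in Ici (K:ℝ), ENNReal.ofReal (1 / g x) :=
    le_trans (lintegral_mono_set hcover) (lintegral_union_le _ _ _)
  exact ne_top_of_le_ne_top (ENNReal.add_ne_top.2 ⟨hcomp, htailint⟩) hfinal


lemma not_summable_of_linear_ub (a : ℕ → ℝ) {c : ℝ} (hc : 0 < c) (k : ℕ)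
    (hpos : ∀ n, 0 < a n) (hub : ∀ n : ℕ, k ≤ n → a n ≤ c * ((n:ℝ) + 1)) :
    ¬ Summable (fun n => 1 / a n) := by
  intro hs
  have h2 : Summable (fun n : ℕ => 1 / a (n + k)) :=
    (summable_nat_add_iff (f := fun n => 1 / a n) k).2 hs
  have h3 : Summable (fun n : ℕ => 1 / (c * ((n:ℝ) + k + 1))) := by
    refine Summable.of_nonneg_of_le (fun n => by positivity) (fun n => ?_) h2
    have hub' : a (n + k) ≤ c * ((n:ℝ) + k + 1) := by
      have := hub (n + k) (Nat.le_add_left k n)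
      have hcast : ((n + k : ℕ):ℝ) + 1 = (n:ℝ) + k + 1 := by push_cast; ring
      rwa [hcast] at this
    exact one_div_le_one_div_of_le (hpos _) hub'
  exact not_summable_inv_linear hc k h3

lemma sign_dichotomy (f : ℝ → ℝ) (a₀ : ℝ) (ha₀ : 0 < a₀)
    (hf_cont : ContinuousOn f (Ici 0)) (hfne : ∀ x ≥ a₀, f x ≠ 0) :
    (∀ x ≥ a₀, 0 < f x) ∨ (∀ x ≥ a₀, f x < 0) := by
  rcases (hfne a₀ le_rfl).lt_or_gt with hneg | hpos
  · right
    intro x hx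
    by_contra h
    have hxpos : 0 < f x := lt_of_le_of_ne (not_lt.1 h) (Ne.symm (hfne x hx))
    have hsub : Icc a₀ x ⊆ Ici 0 := fun y hy => le_trans (le_of_lt ha₀) hy.1
    have : (0:ℝ) ∈ Icc (f a₀) (f x) := ⟨le_of_lt hneg, le_of_lt hxpos⟩
    obtain ⟨z, hz, hfz⟩ := intermediate_value_Icc hx (hf_cont.mono hsub) this
    exact hfne z hz.1 hfz
  · left
    intro x hx
    by_contra h
    have hxneg : f x < 0 := lt_of_le_of_ne (not_lt.1 h) (hfne x hx)
    have hsub : Icc a₀ x ⊆ Ici 0 := fun y hy => le_trans (le_of_lt ha₀) hy.1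
    have : (0:ℝ) ∈ Icc (f x) (f a₀) := ⟨le_of_lt hxneg, le_of_lt hpos⟩
    obtain ⟨z, hz, hfz⟩ := intermediate_value_Icc' hx (hf_cont.mono hsub) this
    exact hfne z hz.1 hfz
/-- Under (H1), `μ > 0`, `f x ≠ 0` for `x ≥ a₀`:
`Σ_{n≥1} 1/(μ n + F⁻(n)) = ∞ ↔ ∫_{a₀}^∞ 1/|f x| dx = ∞`. -/
theorem stmt9 (f : ℝ → ℝ) (θ : ℝ) (hθ : 0 ≤ θ)
    (hf_cont : ContinuousOn f (Ici 0)) (hf0 : f 0 = 0)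
    (hH1 : ∀ x ≥ (0:ℝ), ∀ y ≥ (0:ℝ), f (x + y) - f y ≤ θ * x)
    (mu : ℝ) (hmu : 0 < mu)
    (a₀ : ℝ) (ha₀ : 0 < a₀) (hfne : ∀ x ≥ a₀, f x ≠ 0) :
    (∑' n : ℕ, ENNReal.ofReal
        (1 / (mu * (n + 1) +
          ∑ ℓ ∈ Finset.Icc 1 (n + 1), max (-(f ℓ - f ((ℓ : ℝ) - 1))) 0))) = ⊤ ↔
      (∫⁻ x in Ici a₀, ENNReal.ofReal (1 / |f x|)) = ⊤ := by
  set a : ℕ → ℝ := fun n : ℕ =>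
    mu * ((n:ℝ) + 1) + ∑ ℓ ∈ Finset.Icc 1 (n+1), max (-(f ℓ - f ((ℓ:ℝ)-1))) 0 with hadef
  have hgoal : (∑' n : ℕ, ENNReal.ofReal
        (1 / (mu * (n + 1) +
          ∑ ℓ ∈ Finset.Icc 1 (n + 1), max (-(f ℓ - f ((ℓ : ℝ) - 1))) 0)))
      = ∑' n : ℕ, ENNReal.ofReal (1 / a n) := rfl
  rw [hgoal]
  have hFnonneg : ∀ j : ℕ, (0:ℝ) ≤ ∑ ℓ ∈ Finset.Icc 1 j, max (-(f ℓ - f ((ℓ:ℝ)-1))) 0 :=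
    fun j => Finset.sum_nonneg fun ℓ _ => le_max_right _ _
  have ha_pos : ∀ n, 0 < a n := by
    intro n
    have h1 : (0:ℝ) < mu * ((n:ℝ) + 1) := by positivity
    have h2 := hFnonneg (n+1)
    rw [hadef]
    dsimp only
    linarith
  have hF := fun j => F_bounds f θ hθ hf0 hH1 j
  set g : ℝ → ℝ := fun x => -f x with hgdef
  have hlipg : ∀ x ≥ (0:ℝ), ∀ y ≥ (0:ℝ), g y - θ * x ≤ g (x + y) := by
    intro x hx y hy
    have := hH1 x hx y hy
    simp only [hgdef]
    linarith
  have hcastj : ∀ n : ℕ, ((n+1:ℕ):ℝ) = (n:ℝ) + 1 := fun n => by push_cast; ring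
  have ha_lb : ∀ n : ℕ, mu * ((n:ℝ) + 1) + g ((n:ℝ) + 1) ≤ a n := by
    intro n
    have h1 := (hF (n+1)).1
    rw [hcastj n] at h1
    rw [hadef]
    simp only [hgdef]
    linarith
  have ha_ub : ∀ n : ℕ, a n ≤ (mu + θ) * ((n:ℝ) + 1) + g ((n:ℝ) + 1) := by
    intro n
    have h1 := (hF (n+1)).2
    rw [hcastj n] at h1
    rw [hadef]
    simp only [hgdef]
    nlinarith
  have hLHS : (∑' n : ℕ, ENNReal.ofReal (1 / a n)) = ⊤ ↔ ¬ Summable (fun n => 1 / a n) :=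
    tsum_ofReal_eq_top_iff fun n => le_of_lt (one_div_pos.2 (ha_pos n))
  rw [hLHS]
  rcases sign_dichotomy f a₀ ha₀ hf_cont hfne with hpos | hneg
  · -- f positive on [a₀, ∞): both sides are ⊤
    have hθpos : 0 < θ := by
      have h := hH1 a₀ (le_of_lt ha₀) 0 le_rfl
      rw [add_zero, hf0, sub_zero] at h
      have := hpos a₀ le_rfl
      nlinarith
    have hA : ¬ Summable (fun n => 1 / a n) := by
      refine not_summable_of_linear_ub a (c := mu + θ) (by positivity) ⌈a₀⌉₊ ha_pos ?_
      intro n hn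
      have hna : a₀ ≤ (n:ℝ) + 1 := by
        have h1 : a₀ ≤ (⌈a₀⌉₊:ℝ) := Nat.le_ceil a₀
        have h2 : ((⌈a₀⌉₊:ℕ):ℝ) ≤ (n:ℝ) := by exact_mod_cast hn
        linarith
      have h3 := (hF (n+1)).2
      rw [hcastj n] at h3
      have h4 : 0 < f ((n:ℝ) + 1) := hpos _ hna
      rw [hadef]
      dsimp only
      nlinarith
    have hB : (∫⁻ x in Ici a₀, ENNReal.ofReal (1 / |f x|)) = ⊤ := by
      refine lintegral_inv_top (fun x => |f x|) hθpos fun x hx => ?_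
      have h5 : 0 < f x := hpos x hx
      have h6 : f x ≤ θ * x := by
        have h := hH1 x (le_trans (le_of_lt ha₀) hx) 0 le_rfl
        rwa [add_zero, hf0, sub_zero] at h
      rw [abs_of_pos h5]
      exact ⟨h5, h6⟩
    exact iff_of_true hA hB
  · -- f negative on [a₀, ∞)
    have hgpos : ∀ x ≥ a₀, 0 < g x := fun x hx => by
      simp only [hgdef]
      linarith [hneg x hx]
    have hcongr : (∫⁻ x in Ici a₀, ENNReal.ofReal (1 / |f x|))
        = ∫⁻ x in Ici a₀, ENNReal.ofReal (1 / g x) := by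
      refine setLIntegral_congr_fun measurableSet_Ici (fun x hx => ?_)
      rw [abs_of_neg (hneg x hx)]
    rw [hcongr]
    constructor
    · intro hns
      exact caseneg_sum_to_int g θ mu a₀ hθ hmu ha₀ a ha_pos hlipg hgpos ha_lb hns
    · intro htop hcon
      exact caseneg_int_finite g θ mu a₀ hθ hmu ha₀ hf_cont.neg a ha_pos hlipg hgpos
        ha_ub hcon htop
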